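/- Let q be a power of an odd prime p and let F be a finite field with q elements. Then the polynomial x^{2q-1} + y^{2q-1} + (-x-y)^{2q-1} ∈ F[x,y] is not a d-th power for any integer d ≥ 2; that is, there is no g ∈ F[x,y] and no d ≥ 2 with x^{2q-1} + y^{2q-1} + (-x-y)^{2q-1} = g^d. -/
import Mathlib


open MvPolynomial

/-- For `F` a finite field with `q = p^f` elements (`p` an odd prime),
the polynomial `x^(2q-1) + y^(2q-1) + (-x-y)^(2q-1) ∈ F[x,y]` is not a `d`-th power
for any `d ≥ 2`. -/
theorem not_a_power
    (p f : ℕ) (hp : p.Prime) (hodd : Odd p) (hf : 0 < f)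
    (F : Type) [Field F] [Fintype F] (hF : Fintype.card F = p ^ f) :
    ¬ ∃ (g : MvPolynomial (Fin 2) F) (d : ℕ), 2 ≤ d ∧
      (X 0 : MvPolynomial (Fin 2) F) ^ (2 * p ^ f - 1)
        + (X 1) ^ (2 * p ^ f - 1)
        + (-(X 0) - X 1) ^ (2 * p ^ f - 1) = g ^ d := by
  rintro ⟨g, d, hd, hg⟩
  set q : ℕ := p ^ f with hq
  set n : ℕ := 2 * q - 1 with hn
  have hp3 : 3 ≤ p := hp.two_le.lt_of_ne (by rintro rfl; exact (by norm_num : ¬ Odd 2) hodd)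
  have hq3 : 3 ≤ q := le_trans hp3 (Nat.le_self_pow hf.ne' p)
  have hn5 : 5 ≤ n := by omega
  have hnodd : Odd n := Nat.Even.sub_odd (by omega) (by simp [Nat.even_mul]) odd_one
  -- map to single-variable polynomials: X 0 ↦ X, X 1 ↦ 1
  let ψ : MvPolynomial (Fin 2) F →ₐ[F] Polynomial F := aeval ![Polynomial.X, 1]
  have hψ0 : ψ (X 0) = Polynomial.X := by simp [ψ]
  have hψ1 : ψ (X 1) = 1 := by simp [ψ]
  -- the image polynomial
  have hPim : ψ ((X 0 : MvPolynomial (Fin 2) F) ^ n + (X 1) ^ n + (-(X 0) - X 1) ^ n)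
      = Polynomial.X ^ n + 1 - (Polynomial.X + 1) ^ n := by
    have : (-(X 0 : MvPolynomial (Fin 2) F) - X 1) = -(X 0 + X 1) := by ring
    rw [this]
    simp only [map_add, map_pow, map_neg, hψ0, hψ1, hnodd.neg_pow, one_pow]
    ring
  set P : Polynomial F := Polynomial.X ^ n + 1 - (Polynomial.X + 1) ^ n with hP
  have hPd : P = (ψ g) ^ d := by
    rw [← hPim, hg, map_pow]
  -- coefficient 1 of P is 1 (nonzero)
  have hcard : ((q : ℕ) : F) = 0 := by
    have := FiniteField.cast_card_eq_zero F
    rwa [hF] at this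
  have hnF : ((n : ℕ) : F) = -1 := by
    have : ((n : ℕ) : F) = 2 * ((q : ℕ) : F) - 1 := by
      rw [hn]
      push_cast [Nat.cast_sub (by omega : 1 ≤ 2 * q)]
      ring
    rw [this, hcard]; ring
  have hcoeff1 : P.coeff 1 = 1 := by
    rw [hP]
    simp only [Polynomial.coeff_sub, Polynomial.coeff_add, Polynomial.coeff_X_pow,
      Polynomial.coeff_one, Polynomial.coeff_X_add_one_pow]
    rw [if_neg (by omega), if_neg (by norm_num), Nat.choose_one_right, hnF]
    ring
  -- coefficient 0 of P is 0, so X ∣ P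
  have hcoeff0 : P.coeff 0 = 0 := by
    rw [hP]
    simp only [Polynomial.coeff_sub, Polynomial.coeff_add, Polynomial.coeff_X_pow,
      Polynomial.coeff_one, Polynomial.coeff_X_add_one_pow]
    rw [if_neg (by omega), Nat.choose_zero_right]
    norm_num
  have hXdvd : Polynomial.X ∣ P := Polynomial.X_dvd_iff.mpr hcoeff0
  have hXdvdg : Polynomial.X ∣ ψ g :=
    Polynomial.prime_X.dvd_of_dvd_pow (hPd ▸ hXdvd)
  have hX2 : Polynomial.X ^ 2 ∣ P := by
    rw [hPd]
    exact dvd_trans (pow_dvd_pow _ hd) (pow_dvd_pow_of_dvd hXdvdg d)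
  obtain ⟨Q, hQ⟩ := hX2
  rw [hQ, mul_comm, Polynomial.coeff_mul_X_pow'] at hcoeff1
  rw [if_neg (by norm_num)] at hcoeff1
  exact one_ne_zero hcoeff1.symm
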